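/- In the set agreement algorithm under the Sigma_{n-1}-influence message adversary, at most n-1 distinct decision values are obtained: n-1-set agreement (agreement, validity, termination within n rounds) holds. -/

import Mathlib

/-- A root component of a directed graph `G`: a strongly connected component
(maximal set of mutually reachable vertices) with no incoming edges from outside. -/
def IsRootComponent {V : Type*} (G : V → V → Prop) (R : Set V) : Prop :=
  R.Nonempty ∧ (∀ p ∈ R, ∀ q ∈ R, Relation.ReflTransGen G p q) ∧
    ∀ p ∈ R, ∀ q, G q p → q ∈ R

/-- A causal influence chain of length `k` from `p` (starting in round `r`) to `q`. -/
def InflChain {V : Type*} (G : ℕ → V → V → Prop) (r : ℕ) (p q : V) (k : ℕ) : Prop :=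
  ∃ f : ℕ → V, f 0 = p ∧ f k = q ∧ ∀ i < k, f i = f (i + 1) ∨ G (r + i) (f i) (f (i + 1))

/-- The dynamic causal distance `cd_r(p,q)`: length of the shortest causal influence
chain from `p` starting in round `r` to `q` (`⊤` if none exists, `1` for `p = q`). -/
noncomputable def cd {V : Type*} (G : ℕ → V → V → Prop) (r : ℕ) (p q : V) : ℕ∞ :=
  sInf {k : ℕ∞ | ∃ m : ℕ, k = (m : ℕ∞) ∧ 1 ≤ m ∧ InflChain G r p q m}

/-- Correctness of the set agreement algorithm under the `Σ_{n-1}`-influence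
message adversary: `n` processes with distinct initial values `x` run for `n`
rounds the flooding-max algorithm (value estimate `val`, decision `y`), where the
adversary guarantees that among any `n` single-process vertex-stable root
components `{ps i}` over intervals `[ia i, ib i]`, some one influences another
(a causal chain starting after the first interval ends before or at the beginning
of the second).  Then termination (all decided at the end of round `n`), validity
(every decision is some process's input) and `n-1`-agreement (at most `n-1`
distinct decision values) hold. -/
theorem stmt_15 {V : Type*} [Fintype V] [DecidableEq V]
    (hn : 2 ≤ Fintype.card V)
    (G : ℕ → V → V → Prop)
    (x : V → ℕ) (hx : Function.Injective x)
    (val : V → ℕ → ℕ) (y : V → ℕ → Option ℕ)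
    (hval1 : ∀ p, val p 1 = x p) (hy1 : ∀ p, y p 1 = none)
    -- round-`r` update of the value estimate: maximum of own and received values
    (hval : ∀ p r, 1 ≤ r → r ≤ Fintype.card V →
      (val p (r + 1) = val p r ∨ ∃ q, q ≠ p ∧ G r q p ∧ val p (r + 1) = val q r) ∧
      val p r ≤ val p (r + 1) ∧
      ∀ q, q ≠ p → G r q p → val q r ≤ val p (r + 1))
    -- decisions are irrevocable
    (hy_keep : ∀ p r d, y p r = some d → y p (r + 1) = some d)
    -- adopt a received decision
    (hy_adopt : ∀ p r, 1 ≤ r → r ≤ Fintype.card V → y p r = none →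
      (∃ q, q ≠ p ∧ G r q p ∧ y q r ≠ none) →
      ∃ q d, q ≠ p ∧ G r q p ∧ y q r = some d ∧ y p (r + 1) = some d)
    -- decide on own value when no message is received
    (hy_iso : ∀ p r, 1 ≤ r → r ≤ Fintype.card V → y p r = none →
      (∀ q, q ≠ p → ¬ G r q p) → y p (r + 1) = some (val p r))
    -- otherwise stay undecided before round n …
    (hy_none : ∀ p r, 1 ≤ r → r < Fintype.card V → y p r = none →
      (∃ q, q ≠ p ∧ G r q p) → (∀ q, q ≠ p → G r q p → y q r = none) →
      y p (r + 1) = none)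
    -- … and decide on the current value estimate at the end of round n
    (hy_last : ∀ p, y p (Fintype.card V) = none →
      (∃ q, q ≠ p ∧ G (Fintype.card V) q p) →
      (∀ q, q ≠ p → G (Fintype.card V) q p → y q (Fintype.card V) = none) →
      y p (Fintype.card V + 1) = some (val p (Fintype.card V + 1)))
    -- the Σ_{n-1}-influence message adversary
    (hadv : ∀ (ps : Fin (Fintype.card V) → V) (ia ib : Fin (Fintype.card V) → ℕ),
      Function.Injective ps →
      (∀ i, 1 ≤ ia i ∧ ia i ≤ ib i ∧
        ∀ t, ia i ≤ t → t ≤ ib i → IsRootComponent (G t) {ps i}) →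
      ∃ i j, i ≠ j ∧ ib i < ia j ∧
        cd G (ib i + 1) (ps i) (ps j) ≤ ((ia j - ib i : ℕ) : ℕ∞)) :
    (∀ p, y p (Fintype.card V + 1) ≠ none) ∧
    (∀ p d, y p (Fintype.card V + 1) = some d → ∃ q, d = x q) ∧
    {d : ℕ | ∃ p, y p (Fintype.card V + 1) = some d}.ncard ≤ Fintype.card V - 1 := by

  classical
  set n := Fintype.card V with hndef
  have hn1 : 1 ≤ n := by omega
  -- decisions are kept forever
  have keep0 : ∀ p d r k, y p r = some d → y p (r + k) = some d := by
    intro p d r k h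
    induction k with
    | zero => exact h
    | succ k IH => exact hy_keep p (r + k) d IH
  have keep : ∀ p d r s, r ≤ s → y p r = some d → y p s = some d := by
    intro p d r s hrs h
    have h2 := keep0 p d r (s - r) h
    rwa [Nat.add_sub_cancel' hrs] at h2
  -- val is monotone
  have vmono0 : ∀ p r k, 1 ≤ r → r + k ≤ n + 1 → val p r ≤ val p (r + k) := by
    intro p r k h1 hk
    induction k with
    | zero => exact le_rfl
    | succ k IH =>
      have h2 := (hval p (r + k) (by omega) (by omega)).2.1
      exact le_trans (IH (by omega)) h2
  have vmono : ∀ p r s, 1 ≤ r → r ≤ s → s ≤ n + 1 → val p r ≤ val p s := by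
    intro p r s h1 h2 h3
    have := vmono0 p r (s - r) h1 (by omega)
    rwa [Nat.add_sub_cancel' h2] at this
  have hxval : ∀ p r, 1 ≤ r → r ≤ n + 1 → x p ≤ val p r := by
    intro p r h1 h2
    have := vmono p 1 r (le_refl 1) h1 h2
    rwa [hval1 p] at this
  -- termination
  have term : ∀ p, y p (n + 1) ≠ none := by
    intro p
    cases hyn : y p n with
    | some d => rw [keep p d n (n + 1) (by omega) hyn]; simp
    | none =>
      by_cases hex : ∃ q, q ≠ p ∧ G n q p
      · by_cases hd2 : ∃ q, q ≠ p ∧ G n q p ∧ y q n ≠ none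
        · obtain ⟨q, d, _, _, _, hyp⟩ := hy_adopt p n hn1 le_rfl hyn hd2
          rw [hyp]; simp
        · push_neg at hd2
          rw [hy_last p hyn hex hd2]; simp
      · push_neg at hex
        rw [hy_iso p n hn1 le_rfl hyn hex]; simp
  have term' : ∀ p, ∃ d, y p (n + 1) = some d := by
    intro p
    rcases h : y p (n + 1) with _ | d
    · exact absurd h (term p)
    · exact ⟨d, rfl⟩
  choose dec hdec using term'
  -- validity of val
  have Lval : ∀ k, k ≤ n → ∀ p, ∃ q, val p (k + 1) = x q := by
    intro k
    induction k with
    | zero => intro _ p; exact ⟨p, hval1 p⟩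
    | succ k IH =>
      intro hk p
      rcases (hval p (k + 1) (by omega) (by omega)).1 with h | ⟨q, _, _, h⟩
      · obtain ⟨q', hq'⟩ := IH (by omega) p
        exact ⟨q', by rw [h, hq']⟩
      · obtain ⟨q', hq'⟩ := IH (by omega) q
        exact ⟨q', by rw [h, hq']⟩
  -- validity of decisions
  have Ldec : ∀ k, k ≤ n → ∀ p d, y p (k + 1) = some d → ∃ q, d = x q := by
    intro k
    induction k with
    | zero =>
      intro _ p d h
      rw [hy1 p] at h; exact nomatch h
    | succ k IH =>
      intro hk p d h
      cases hyk : y p (k + 1) with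
      | some d' =>
        have h2 := hy_keep p (k + 1) d' hyk
        have hdd : d = d' := Option.some.inj (h.symm.trans h2)
        exact hdd ▸ IH (by omega) p d' hyk
      | none =>
        by_cases hex : ∃ q, q ≠ p ∧ G (k + 1) q p
        · by_cases hd2 : ∃ q, q ≠ p ∧ G (k + 1) q p ∧ y q (k + 1) ≠ none
          · obtain ⟨q, d', hqp, hG, hyq, hsome⟩ := hy_adopt p (k + 1) (by omega) (by omega) hyk hd2
            have hdd : d = d' := Option.some.inj (h.symm.trans hsome)
            exact hdd ▸ IH (by omega) q d' hyq
          · push_neg at hd2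
            by_cases hlt : k + 1 < n
            · have h2 := hy_none p (k + 1) (by omega) hlt hyk hex hd2
              rw [h2] at h; exact nomatch h
            · have hkn : k + 1 = n := by omega
              rw [hkn] at hyk hex hd2 h
              have h2 := hy_last p hyk hex hd2
              have hdd : d = val p (n + 1) := Option.some.inj (h.symm.trans h2)
              obtain ⟨q, hq⟩ := Lval n le_rfl p
              exact ⟨q, by rw [hdd, hq]⟩
        · push_neg at hex
          have h2 := hy_iso p (k + 1) (by omega) (by omega) hyk hex
          have hdd : d = val p (k + 1) := Option.some.inj (h.symm.trans h2)
          obtain ⟨q, hq⟩ := Lval k (by omega) p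
          exact ⟨q, by rw [hdd, hq]⟩
  refine ⟨term, fun p d h => Ldec n le_rfl p d h, ?_⟩
  -- decision times
  have hexR : ∀ p, ∃ r, 1 ≤ r ∧ y p (r + 1) ≠ none := fun p => ⟨n, hn1, term p⟩
  let R : V → ℕ := fun p => Nat.find (hexR p)
  have hR1 : ∀ p, 1 ≤ R p := fun p => (Nat.find_spec (hexR p)).1
  have hRle : ∀ p, R p ≤ n := fun p => Nat.find_min' (hexR p) ⟨hn1, term p⟩
  have hRsome : ∀ p, y p (R p + 1) = some (dec p) := by
    intro p
    have h2 := (Nat.find_spec (hexR p)).2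
    rcases Option.ne_none_iff_exists'.mp h2 with ⟨d, hd⟩
    have h3 := keep p d (R p + 1) (n + 1) (by have := hRle p; omega) hd
    have h4 : dec p = d := Option.some.inj ((hdec p).symm.trans h3)
    rw [hd, h4]
  have hRnone : ∀ p s, 1 ≤ s → s ≤ R p → y p s = none := by
    intro p s h1 h2
    rcases s with _ | t
    · omega
    · rcases t with _ | t
      · exact hy1 p
      · have hmin := Nat.find_min (hexR p) (show t + 1 < R p by omega)
        by_contra hne
        exact hmin ⟨by omega, hne⟩
  have none_le : ∀ q t, 1 ≤ t → y q t = none → t ≤ R q := by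
    intro q t h1 hnone
    by_contra h
    push_neg at h
    have h2 := keep q (dec q) (R q + 1) t (by omega) (hRsome q)
    rw [h2] at hnone; exact nomatch hnone
  -- main case split on injectivity of dec
  by_cases hinj : Function.Injective dec
  · exfalso
    -- every value is decided
    have hvalid' : ∀ p, ∃ q, dec p = x q := fun p => Ldec n le_rfl p (dec p) (hdec p)
    have himg : Finset.image x Finset.univ ⊆ Finset.image dec Finset.univ := by
      have hsub : Finset.image dec Finset.univ ⊆ Finset.image x Finset.univ := by
        intro d hd
        simp only [Finset.mem_image, Finset.mem_univ, true_and] at hd ⊢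
        obtain ⟨p, rfl⟩ := hd
        obtain ⟨q, hq⟩ := hvalid' p
        exact ⟨q, hq.symm⟩
      have hcard : (Finset.image x Finset.univ).card ≤ (Finset.image dec Finset.univ).card := by
        rw [Finset.card_image_of_injective _ hx, Finset.card_image_of_injective _ hinj]
      intro d hd
      rwa [Finset.eq_of_subset_of_card_le hsub hcard]
    have hsurjx : ∀ q, ∃ p, dec p = x q := by
      intro q
      have : x q ∈ Finset.image dec Finset.univ :=
        himg (Finset.mem_image_of_mem x (Finset.mem_univ q))
      simpa using this
    -- decision event characterization
    have EV : ∀ p, ((∀ q, q ≠ p → ¬ G (R p) q p) ∧ dec p = val p (R p)) ∨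
        (R p = n ∧ dec p = val p (n + 1) ∧ ∃ q, q ≠ p ∧ G n q p ∧ y q n = none) := by
      intro p
      have hr1 := hR1 p
      have hrn := hRle p
      have hynone : y p (R p) = none := hRnone p (R p) hr1 le_rfl
      by_cases hex : ∃ q, q ≠ p ∧ G (R p) q p
      · by_cases hd2 : ∃ q, q ≠ p ∧ G (R p) q p ∧ y q (R p) ≠ none
        · exfalso
          obtain ⟨q, d, hqp, hG, hyq, hyp⟩ := hy_adopt p (R p) hr1 hrn hynone hd2
          have h1 : dec p = d := Option.some.inj ((hRsome p).symm.trans hyp)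
          have h2 := keep q d (R p) (n + 1) (by omega) hyq
          have h3 : dec q = d := Option.some.inj ((hdec q).symm.trans h2)
          exact hqp (hinj (h3.trans h1.symm))
        · push_neg at hd2
          by_cases hlt : R p < n
          · exfalso
            have h2 := hy_none p (R p) hr1 hlt hynone hex hd2
            have h3 := hRsome p
            rw [h2] at h3; exact nomatch h3
          · have hRn : R p = n := by omega
            right
            rw [hRn] at hynone hex hd2
            have hl := hy_last p hynone hex hd2
            have h3 : dec p = val p (n + 1) := by
              have := hRsome p
              rw [hRn] at this
              exact Option.some.inj (this.symm.trans hl)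
            obtain ⟨q, hqp, hG⟩ := hex
            exact ⟨hRn, h3, q, hqp, hG, hd2 q hqp hG⟩
      · left
        push_neg at hex
        refine ⟨hex, ?_⟩
        have hl := hy_iso p (R p) hr1 hrn hynone hex
        exact Option.some.inj ((hRsome p).symm.trans hl)
    have hdec_ge : ∀ p, x p ≤ dec p := by
      intro p
      rcases EV p with ⟨_, h⟩ | ⟨_, h, _⟩
      · rw [h]; exact hxval p (R p) (hR1 p) (by have := hRle p; omega)
      · rw [h]; exact hxval p (n + 1) (by omega) le_rfl
    -- everyone decides its own value
    have main : ∀ p, dec p = x p := by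
      have key : ∀ m p, x p = m → dec p = x p := by
        intro m
        induction m using Nat.strong_induction_on with
        | _ m IH =>
          intro p hpm
          obtain ⟨p', hp'⟩ := hsurjx p
          have hle : x p' ≤ x p := le_trans (hdec_ge p') (le_of_eq hp')
          rcases lt_or_eq_of_le hle with hlt | heq
          · exfalso
            have h2 := IH (x p') (by omega) p' rfl
            rw [h2] at hp'
            omega
          · have hpp : p' = p := hx heq
            rw [hpp] at hp'
            exact hp'
      intro p; exact key (x p) p rfl
    -- neighbors before decision are undecided
    have hnbr_none : ∀ p t q, 1 ≤ t → t < R p → q ≠ p → G t q p → y q t = none := by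
      intro p t q h1 h2 hqp hG
      by_contra hne
      have hyp := hRnone p t h1 (by omega)
      obtain ⟨q', d, _, _, _, hsome⟩ :=
        hy_adopt p t h1 (by have := hRle p; omega) hyp ⟨q, hqp, hG, hne⟩
      have h3 := hRnone p (t + 1) (by omega) (by omega)
      rw [h3] at hsome; exact nomatch hsome
    have hnbr_lt : ∀ p t q, 1 ≤ t → t < R p → q ≠ p → G t q p →
        dec p = val p (R p) → x q < x p := by
      intro p t q h1 h2 hqp hG hA
      have hRn := hRle p
      have h3 : val q t ≤ val p (t + 1) := (hval p t h1 (by omega)).2.2 q hqp hG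
      have h4 : val p (t + 1) ≤ val p (R p) := vmono p (t + 1) (R p) (by omega) (by omega) (by omega)
      have h5 : x q ≤ val q t := hxval q t h1 (by omega)
      have h6 : x q ≤ x p := by
        have := main p
        omega
      exact lt_of_le_of_ne h6 (fun h => hqp (hx h))
    -- ranks
    let rk : V → ℕ := fun p => (Finset.univ.filter (fun q => x q ≤ x p)).card
    have hrk_pos : ∀ p, 1 ≤ rk p := by
      intro p
      exact Finset.card_pos.mpr ⟨p, by simp⟩
    have hrk_le : ∀ p, rk p ≤ n := by
      intro p
      have := Finset.card_filter_le Finset.univ (fun q => x q ≤ x p)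
      rwa [Finset.card_univ] at this
    have hrk_lt : ∀ p q, x q < x p → rk q < rk p := by
      intro p q h
      apply Finset.card_lt_card
      rw [Finset.ssubset_def]
      constructor
      · intro z hz
        simp only [Finset.mem_filter, Finset.mem_univ, true_and] at hz ⊢
        omega
      · intro hsub
        have := hsub (show p ∈ Finset.univ.filter (fun q => x q ≤ x p) by simp)
        simp only [Finset.mem_filter, Finset.mem_univ, true_and] at this
        omega
    -- every process decides by isolation, at round ≤ its rank
    have RANK : ∀ m p, rk p = m → (R p ≤ rk p ∧ ∀ q, q ≠ p → ¬ G (R p) q p) := by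
      intro m
      induction m using Nat.strong_induction_on with
      | _ m IH =>
        intro p hm
        have hA : (∀ q, q ≠ p → ¬ G (R p) q p) ∧ dec p = val p (R p) := by
          rcases EV p with h | ⟨hRn, hB, q, hqp, hG, hyq⟩
          · exact h
          · exfalso
            have h3 : val q n ≤ val p (n + 1) := (hval p n hn1 le_rfl).2.2 q hqp hG
            have h5 : x q ≤ val q n := hxval q n hn1 (by omega)
            have h6 : x q ≤ x p := by have := main p; omega
            have h7 : x q < x p := lt_of_le_of_ne h6 (fun h => hqp (hx h))
            have h8 := (IH (rk q) (by rw [← hm]; exact hrk_lt p q h7) q rfl).1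
            have h9 : n ≤ R q := none_le q n hn1 hyq
            have h10 := hrk_le p
            have h11 := hrk_lt p q h7
            omega
        refine ⟨?_, hA.1⟩
        by_contra hcon
        push_neg at hcon
        have hiso : ∀ q, q ≠ p → ¬ G (rk p) q p := by
          intro q hqp hG
          have h1 := hrk_pos p
          have hx1 : x q < x p := hnbr_lt p (rk p) q h1 hcon hqp hG hA.2
          have hy1' : y q (rk p) = none := hnbr_none p (rk p) q h1 hcon hqp hG
          have h2 : rk p ≤ R q := none_le q (rk p) h1 hy1'
          have h3 := (IH (rk q) (by rw [← hm]; exact hrk_lt p q hx1) q rfl).1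
          have h4 := hrk_lt p q hx1
          omega
        have h5 := hy_iso p (rk p) (hrk_pos p) (hrk_le p)
          (hRnone p (rk p) (hrk_pos p) (by omega)) hiso
        have h6 := hRnone p (rk p + 1) (by omega) (by omega)
        rw [h6] at h5; exact nomatch h5
    have ISO : ∀ p, ∀ q, q ≠ p → ¬ G (R p) q p := fun p => (RANK (rk p) p rfl).2
    -- apply the adversary guarantee
    let e : Fin n ≃ V := (Fintype.equivFin V).symm
    obtain ⟨i, j, hij, hlt, hcd⟩ := hadv (fun i => e i) (fun i => R (e i)) (fun i => R (e i))
      (fun a b hab => e.injective hab)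
      (by
        intro i
        refine ⟨hR1 _, le_rfl, ?_⟩
        intro t h1 h2
        have ht : t = R (e i) := le_antisymm h2 h1
        subst ht
        refine ⟨⟨e i, rfl⟩, ?_, ?_⟩
        · intro a ha b hb
          rw [Set.mem_singleton_iff] at ha hb
          subst ha; subst hb
          exact Relation.ReflTransGen.refl
        · intro a ha q hGq
          rw [Set.mem_singleton_iff] at ha ⊢
          subst ha
          by_contra hne
          exact ISO (e i) q hne hGq)
    set c : ℕ := R (e j) - R (e i) with hc
    have hchain : ∃ m, 1 ≤ m ∧ m ≤ c ∧ InflChain G (R (e i) + 1) (e i) (e j) m := by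
      by_contra hno
      push_neg at hno
      have hlb : ((c + 1 : ℕ) : ℕ∞) ≤ cd G (R (e i) + 1) (e i) (e j) := by
        unfold cd
        apply le_sInf
        rintro k ⟨m, rfl, hm1, hm2⟩
        have hmc : ¬ m ≤ c := fun h => hno m hm1 h hm2
        exact Nat.cast_le.mpr (by omega)
      have h2 := le_trans hlb hcd
      have h3 : c + 1 ≤ c := Nat.cast_le.mp h2
      omega
    obtain ⟨m, hm1, hmc, f, hf0, hfm, hstep⟩ := hchain
    have hRij : R (e i) + m ≤ R (e j) := by omega
    -- decisions propagate along the chain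
    have ind : ∀ k, k ≤ m → y (f k) (R (e i) + 1 + k) ≠ none := by
      intro k
      induction k with
      | zero =>
        intro _
        rw [hf0]
        show y (e i) (R (e i) + 1) ≠ none
        rw [hRsome (e i)]; simp
      | succ k IH =>
        intro hk
        have hprev := IH (by omega)
        obtain ⟨d, hd⟩ := Option.ne_none_iff_exists'.mp hprev
        have ht1 : 1 ≤ R (e i) + 1 + k := by omega
        have htn : R (e i) + 1 + k ≤ n := by have := hRle (e j); omega
        show y (f (k + 1)) ((R (e i) + 1 + k) + 1) ≠ none
        rcases hstep k (by omega) with heq | hG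
        · rw [← heq, hy_keep (f k) (R (e i) + 1 + k) d hd]; simp
        · by_cases hsame : f (k + 1) = f k
          · rw [hsame, hy_keep (f k) (R (e i) + 1 + k) d hd]; simp
          · by_cases hnone : y (f (k + 1)) (R (e i) + 1 + k) = none
            · obtain ⟨q, d', _, _, _, hsome⟩ :=
                hy_adopt (f (k + 1)) (R (e i) + 1 + k) ht1 htn hnone
                  ⟨f k, fun h => hsame h.symm, hG, by rw [hd]; simp⟩
              rw [hsome]; simp
            · obtain ⟨d', hd'⟩ := Option.ne_none_iff_exists'.mp hnone
              rw [hy_keep (f (k + 1)) (R (e i) + 1 + k) d' hd']; simp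
    have hyj_none : y (e j) (R (e j)) = none := hRnone (e j) (R (e j)) (hR1 _) le_rfl
    rcases Nat.lt_or_ge (R (e i) + m) (R (e j)) with hcase | hcase
    · have h1 := ind m le_rfl
      rw [hfm] at h1
      obtain ⟨d, hd⟩ := Option.ne_none_iff_exists'.mp h1
      have h2 := keep (e j) d (R (e i) + 1 + m) (R (e j)) (by omega) hd
      rw [hyj_none] at h2; exact nomatch h2
    · have hm_eq : R (e i) + m = R (e j) := by omega
      by_cases hlast : f (m - 1) = e j
      · have h1 := ind (m - 1) (by omega)
        rw [hlast, show R (e i) + 1 + (m - 1) = R (e j) by omega] at h1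
        exact h1 hyj_none
      · rcases hstep (m - 1) (by omega) with heq | hG
        · rw [show m - 1 + 1 = m by omega, hfm] at heq
          exact hlast heq
        · rw [show m - 1 + 1 = m by omega, hfm,
            show R (e i) + 1 + (m - 1) = R (e j) by omega] at hG
          exact ISO (e j) (f (m - 1)) hlast hG
  · -- dec not injective: at most n - 1 values
    simp only [Function.Injective, not_forall] at hinj
    obtain ⟨a, b, h1, h2⟩ := hinj
    have hSsub : {d : ℕ | ∃ p, y p (n + 1) = some d} ⊆ dec '' (Set.univ \ {a}) := by
      rintro d ⟨p, hp⟩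
      have hdp : d = dec p := Option.some.inj (hp.symm.trans (hdec p))
      by_cases hpa : p = a
      · exact ⟨b, ⟨trivial, fun hb => h2 (by rw [Set.mem_singleton_iff] at hb; rw [hb])⟩,
          by rw [← h1, hdp, hpa]⟩
      · exact ⟨p, ⟨trivial, fun hb => hpa (by rwa [Set.mem_singleton_iff] at hb)⟩, hdp.symm⟩
    have h3 : {d : ℕ | ∃ p, y p (n + 1) = some d}.ncard ≤ (Set.univ \ {a} : Set V).ncard :=
      le_trans (Set.ncard_le_ncard hSsub (Set.Finite.image _ (Set.toFinite _)))
        (Set.ncard_image_le (Set.toFinite _))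
    have h4 : (Set.univ \ {a} : Set V).ncard = n - 1 := by
      rw [Set.ncard_diff_singleton_of_mem (Set.mem_univ a), Set.ncard_univ,
        Nat.card_eq_fintype_card]
    omega
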